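/- Fix β > 0 and let X̄_β^P be a random variable with distribution π_β^P, i.e. P(X̄_β^P = x) = ξ_β(x) − ξ_β(x+1) for x ∈ ℕ. Then the second moment is finite and satisfies E((X̄_β^P)²) = ∑_{x=0}^∞ x²·(ξ_β(x) − ξ_β(x+1)) ≤ 2β·(β+2). -/
import Mathlib


/-- The tail sequence of the invariant distribution `π_β^P` of the mean-field limit
of the Power of Choice policy: `ξ_β(0) = 1` and
`ξ_β(x+1) = (−1 + √(1 + 4β²ξ_β(x)²))/(2β)`. -/
noncomputable def xi (β : ℝ) : ℕ → ℝ
  | 0 => 1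
  | x + 1 => (-1 + Real.sqrt (1 + 4 * β ^ 2 * (xi β x) ^ 2)) / (2 * β)

lemma xi_pos (β : ℝ) (hβ : 0 < β) : ∀ x, 0 < xi β x := by
  intro x
  induction x with
  | zero => norm_num [xi]
  | succ n ih =>
    have h1 : (1 : ℝ) < Real.sqrt (1 + 4 * β ^ 2 * (xi β n) ^ 2) := by
      have : Real.sqrt 1 < Real.sqrt (1 + 4 * β ^ 2 * (xi β n) ^ 2) :=
        Real.sqrt_lt_sqrt (by norm_num) (by nlinarith [mul_pos (pow_pos hβ 2) (pow_pos ih 2)])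
      simpa using this
    show 0 < (-1 + Real.sqrt (1 + 4 * β ^ 2 * (xi β n) ^ 2)) / (2 * β)
    exact div_pos (by linarith) (by positivity)

lemma xi_rec (β : ℝ) (hβ : 0 < β) (x : ℕ) :
    xi β (x + 1) = β * ((xi β x) ^ 2 - (xi β (x + 1)) ^ 2) := by
  have hnn : (0:ℝ) ≤ 1 + 4 * β ^ 2 * (xi β x) ^ 2 := by positivity
  have hs : Real.sqrt (1 + 4 * β ^ 2 * (xi β x) ^ 2) ^ 2
      = 1 + 4 * β ^ 2 * (xi β x) ^ 2 := Real.sq_sqrt hnn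
  show (-1 + Real.sqrt (1 + 4 * β ^ 2 * (xi β x) ^ 2)) / (2 * β)
      = β * ((xi β x) ^ 2 - ((-1 + Real.sqrt (1 + 4 * β ^ 2 * (xi β x) ^ 2)) / (2 * β)) ^ 2)
  have hβ' : (2 * β) ≠ 0 := by positivity
  field_simp
  nlinarith [hs]

lemma xi_anti (β : ℝ) (hβ : 0 < β) (x : ℕ) : xi β (x + 1) < xi β x := by
  have h1 := xi_pos β hβ x
  have h2 := xi_pos β hβ (x + 1)
  have h3 := xi_rec β hβ x
  have h4 : 0 < β * ((xi β x) ^ 2 - (xi β (x + 1)) ^ 2) := h3 ▸ h2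
  have h5 : (xi β (x + 1)) ^ 2 < (xi β x) ^ 2 := by nlinarith
  exact lt_of_pow_lt_pow_left₀ 2 h1.le h5

lemma xi_le_one (β : ℝ) (hβ : 0 < β) : ∀ x, xi β x ≤ 1 := by
  intro x
  induction x with
  | zero => norm_num [xi]
  | succ n ih => exact le_trans (xi_anti β hβ n).le ih

lemma sum_xi_succ_le (β : ℝ) (hβ : 0 < β) (n : ℕ) :
    ∑ x ∈ Finset.range n, xi β (x + 1) ≤ β := by
  have h : ∑ x ∈ Finset.range n, xi β (x + 1)
      = β * ∑ x ∈ Finset.range n, ((xi β x) ^ 2 - (xi β (x + 1)) ^ 2) := by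
    rw [Finset.mul_sum]
    exact Finset.sum_congr rfl fun x _ => xi_rec β hβ x
  rw [h, Finset.sum_range_sub' (fun x => (xi β x) ^ 2)]
  have h0 : xi β 0 = 1 := rfl
  rw [h0]
  nlinarith [sq_nonneg (xi β n), mul_nonneg hβ.le (sq_nonneg (xi β n))]

lemma sum_xi_le (β : ℝ) (hβ : 0 < β) (n : ℕ) :
    ∑ x ∈ Finset.range n, xi β x ≤ 1 + β := by
  have hsub : ∑ x ∈ Finset.range n, xi β x ≤ ∑ x ∈ Finset.range (n + 1), xi β x := by
    apply Finset.sum_le_sum_of_subset_of_nonneg (Finset.range_subset_range.2 (Nat.le_succ n))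
    exact fun i _ _ => (xi_pos β hβ i).le
  rw [Finset.sum_range_succ'] at hsub
  have h0 : xi β 0 = 1 := rfl
  have := sum_xi_succ_le β hβ n
  rw [h0] at hsub
  linarith

lemma abel1 (β : ℝ) (n : ℕ) :
    ∑ x ∈ Finset.range n, (x : ℝ) ^ 2 * (xi β x - xi β (x + 1)) + (n : ℝ) ^ 2 * xi β n
      = ∑ x ∈ Finset.range n, (2 * (x : ℝ) + 1) * xi β (x + 1) := by
  induction n with
  | zero => simp
  | succ m ih =>
    rw [Finset.sum_range_succ, Finset.sum_range_succ]
    push_cast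
    linear_combination ih

lemma abel2 (β : ℝ) (n : ℕ) :
    ∑ x ∈ Finset.range n, (2 * (x : ℝ) + 1) * ((xi β x) ^ 2 - (xi β (x + 1)) ^ 2)
      + (2 * (n : ℝ) - 1) * (xi β n) ^ 2
      = 2 * ∑ x ∈ Finset.range n, (xi β x) ^ 2 - 1 := by
  induction n with
  | zero => simp [show xi β 0 = 1 from rfl]
  | succ m ih =>
    rw [Finset.sum_range_succ, Finset.sum_range_succ]
    push_cast
    linear_combination ih

lemma partial_sum_bound (β : ℝ) (hβ : 0 < β) (n : ℕ) :
    ∑ x ∈ Finset.range n, (x : ℝ) ^ 2 * (xi β x - xi β (x + 1)) ≤ 2 * β * (β + 2) := by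
  have h1 := abel1 β n
  have h2 := abel2 β n
  have hrec : ∑ x ∈ Finset.range n, (2 * (x : ℝ) + 1) * xi β (x + 1)
      = β * ∑ x ∈ Finset.range n, (2 * (x : ℝ) + 1) * ((xi β x) ^ 2 - (xi β (x + 1)) ^ 2) := by
    rw [Finset.mul_sum]
    refine Finset.sum_congr rfl fun x _ => ?_
    linear_combination (2 * (x : ℝ) + 1) * xi_rec β hβ x
  have hχn := xi_pos β hβ n
  have hχn1 := xi_le_one β hβ n
  have hn : (0:ℝ) ≤ (n : ℝ) := Nat.cast_nonneg n
  -- (2n-1)·ξn² ≥ -1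
  have hU : ∑ x ∈ Finset.range n, (2 * (x : ℝ) + 1) * ((xi β x) ^ 2 - (xi β (x + 1)) ^ 2)
      ≤ 2 * ∑ x ∈ Finset.range n, (xi β x) ^ 2 := by
    have hq : (2 * (n : ℝ) - 1) * (xi β n) ^ 2 + 1 ≥ 0 := by
      nlinarith [mul_nonneg hn (sq_nonneg (xi β n)), sq_nonneg (xi β n)]
    linarith
  have hsq : ∑ x ∈ Finset.range n, (xi β x) ^ 2 ≤ ∑ x ∈ Finset.range n, xi β x :=
    Finset.sum_le_sum fun i _ => by nlinarith [xi_pos β hβ i, xi_le_one β hβ i]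
  have hsum := sum_xi_le β hβ n
  have hn2 : (0:ℝ) ≤ (n : ℝ) ^ 2 * xi β n := by positivity
  have hb1 : β * ∑ x ∈ Finset.range n, (2 * (x : ℝ) + 1) * ((xi β x) ^ 2 - (xi β (x + 1)) ^ 2)
      ≤ β * (2 * (1 + β)) := by
    apply mul_le_mul_of_nonneg_left _ hβ.le
    linarith
  have hconst : β * (2 * (1 + β)) ≤ 2 * β * (β + 2) := by nlinarith
  linarith

/-- Finite second moment: if `X̄_β^P` has distribution `π_β^P`, i.e.
`P(X̄_β^P = x) = ξ_β(x) − ξ_β(x+1)`, then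
`E((X̄_β^P)²) = ∑_x x²(ξ_β(x) − ξ_β(x+1)) ≤ 2β(β+2)`. -/
theorem xi_second_moment_bound (β : ℝ) (hβ : 0 < β) :
    Summable (fun x : ℕ => (x : ℝ) ^ 2 * (xi β x - xi β (x + 1))) ∧
      ∑' x : ℕ, (x : ℝ) ^ 2 * (xi β x - xi β (x + 1)) ≤ 2 * β * (β + 2) := by
  have hnn : ∀ x : ℕ, 0 ≤ (x : ℝ) ^ 2 * (xi β x - xi β (x + 1)) := by
    intro x
    have := xi_anti β hβ x
    exact mul_nonneg (by positivity) (by linarith)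
  have hsum : Summable (fun x : ℕ => (x : ℝ) ^ 2 * (xi β x - xi β (x + 1))) :=
    summable_of_sum_range_le hnn (partial_sum_bound β hβ)
  exact ⟨hsum, Summable.tsum_le_of_sum_range_le hsum (partial_sum_bound β hβ)⟩
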